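/- Let 0 → M₁ → M → M₂ → 0 be a short exact sequence of R-modules with M₁ → M universally injective. If M₁ and M₂ are flat Mittag-Leffler modules, then M is a flat Mittag-Leffler module. -/

import Mathlib

universe u

open TensorProduct

/-- `M` is a Mittag-Leffler module: for every family of `R`-modules `(Q i)`, the canonical map
`M ⊗ (∏ i, Q i) → ∏ i, (M ⊗ Q i)` is injective. -/
def IsMittagLeffler (R : Type u) [CommRing R]
    (M : Type u) [AddCommGroup M] [Module R M] : Prop :=
  ∀ (ι : Type u) (Q : ι → Type u) [∀ i, AddCommGroup (Q i)] [∀ i, Module R (Q i)],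
    Function.Injective (TensorProduct.piRightHom R R M Q)

/-- Naturality of `piRightHom` in the left tensor factor. -/
lemma piRightHom_naturality {R A B : Type u} [CommRing R]
    [AddCommGroup A] [Module R A] [AddCommGroup B] [Module R B]
    (φ : A →ₗ[R] B) (ι : Type u) (Q : ι → Type u)
    [∀ i, AddCommGroup (Q i)] [∀ i, Module R (Q i)]
    (x : A ⊗[R] (∀ i, Q i)) (i : ι) :
    TensorProduct.piRightHom R R B Q (LinearMap.rTensor _ φ x) i
      = LinearMap.rTensor (Q i) φ (TensorProduct.piRightHom R R A Q x i) := by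
  induction x using TensorProduct.induction_on with
  | zero => simp
  | tmul a q => simp [TensorProduct.piRightHom_tmul]
  | add x y hx hy => simp [hx, hy]

/-- If `0 → M₁ → M → M₂ → 0` is a short exact sequence with `M₁ → M` universally injective and
`M₁`, `M₂` flat Mittag-Leffler, then `M` is a flat Mittag-Leffler module. -/
theorem flat_mittagLeffler_of_extension
    (R : Type u) [CommRing R]
    (M₁ : Type u) [AddCommGroup M₁] [Module R M₁]
    (M : Type u) [AddCommGroup M] [Module R M]
    (M₂ : Type u) [AddCommGroup M₂] [Module R M₂]
    (f : M₁ →ₗ[R] M) (g : M →ₗ[R] M₂)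
    (hinj : Function.Injective f) (hsurj : Function.Surjective g)
    (hexact : LinearMap.range f = LinearMap.ker g)
    (huniv : ∀ (Q : Type u) [AddCommGroup Q] [Module R Q],
      Function.Injective (LinearMap.rTensor Q f))
    (h₁flat : Module.Flat R M₁) (h₁ML : IsMittagLeffler R M₁)
    (h₂flat : Module.Flat R M₂) (h₂ML : IsMittagLeffler R M₂) :
    Module.Flat R M ∧ IsMittagLeffler R M := by
  have hfg : Function.Exact f g := LinearMap.exact_iff.mpr hexact.symm
  constructor
  · -- Flatness, via the ideal criterion with `lTensor`.
    rw [Module.Flat.iff_lTensor_injective']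
    intro I
    rw [injective_iff_map_eq_zero]
    intro x hx
    -- push to M₂ ⊗ I
    have hexact2 : Function.Exact (LinearMap.rTensor I f) (LinearMap.rTensor I g) :=
      rTensor_exact I hfg hsurj
    have h2 : LinearMap.lTensor M₂ I.subtype (LinearMap.rTensor I g x)
        = LinearMap.rTensor R g (LinearMap.lTensor M I.subtype x) := by
      rw [← LinearMap.comp_apply, ← LinearMap.comp_apply,
        LinearMap.lTensor_comp_rTensor, LinearMap.rTensor_comp_lTensor]
    rw [hx, map_zero] at h2
    have hx2 : LinearMap.rTensor I g x = 0 :=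
      Module.Flat.iff_lTensor_injective'.mp h₂flat I
        (by simpa using h2)
    obtain ⟨y, rfl⟩ := (hexact2 x).mp hx2
    have h1 : LinearMap.rTensor R f (LinearMap.lTensor M₁ I.subtype y)
        = LinearMap.lTensor M I.subtype (LinearMap.rTensor I f y) := by
      rw [← LinearMap.comp_apply, ← LinearMap.comp_apply,
        LinearMap.rTensor_comp_lTensor, LinearMap.lTensor_comp_rTensor]
    rw [hx] at h1
    have hy : LinearMap.lTensor M₁ I.subtype y = 0 := huniv R (by simpa using h1)
    have : y = 0 := Module.Flat.iff_lTensor_injective'.mp h₁flat I hy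
    rw [this, map_zero]
  · -- Mittag-Leffler
    intro ι Q _ _
    rw [injective_iff_map_eq_zero]
    intro x hx
    have hexact2 : Function.Exact (LinearMap.rTensor (∀ i, Q i) f)
        (LinearMap.rTensor (∀ i, Q i) g) := rTensor_exact _ hfg hsurj
    have h2 : TensorProduct.piRightHom R R M₂ Q (LinearMap.rTensor _ g x) = 0 := by
      funext i
      rw [piRightHom_naturality g ι Q x i, hx]
      simp
    have hx2 : LinearMap.rTensor (∀ i, Q i) g x = 0 := h₂ML ι Q (by simpa using h2)
    obtain ⟨y, rfl⟩ := (hexact2 x).mp hx2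
    have hy : TensorProduct.piRightHom R R M₁ Q y = 0 := by
      funext i
      have := piRightHom_naturality f ι Q y i
      rw [hx] at this
      exact huniv (Q i) (by simpa using this.symm)
    have : y = 0 := h₁ML ι Q (by simpa using hy)
    rw [this, map_zero]
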